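/- The generalized Laguerre polynomials are orthogonal with respect to the weight w_α(x) = x^α e^{−x} on (0, ∞): for n ≠ m, ∫₀^∞ L_n^α(x) L_m^α(x) x^α e^{−x} dx = 0, and for n = m the integral equals Γ(n + α + 1)/n!. -/

import Mathlib

/-- Generalized binomial coefficient C(z, m) for real z. -/
noncomputable def genBinom (z : ℝ) (m : ℕ) : ℝ :=
  (∏ i ∈ Finset.range m, (z - i)) / m.factorial

/-- Generalized Laguerre polynomial L_n^α(x) = Σ_{k=0}^n (-1)^k C(n+α, n-k) x^k / k!. -/
noncomputable def laguerre (α : ℝ) (n : ℕ) (x : ℝ) : ℝ :=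
  ∑ k ∈ Finset.range (n + 1), (-1 : ℝ) ^ k * genBinom (n + α) (n - k) * x ^ k / k.factorial

open Finset MeasureTheory


lemma sum_shift (n : ℕ) (f : ℕ → ℝ) :
    ∑ j ∈ range (n + 2), (-1 : ℝ) ^ j * (n + 1).choose j * f j
      = ∑ j ∈ range (n + 1), (-1 : ℝ) ^ j * n.choose j * (f j - f (j + 1)) := by
  rw [Finset.sum_range_succ' (fun j => (-1 : ℝ) ^ j * (n + 1).choose j * f j) (n + 1)]
  have h1 : ∀ j, ((n + 1).choose (j + 1) : ℝ) = n.choose j + n.choose (j + 1) := by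
    intro j; rw [Nat.choose_succ_succ]; push_cast; ring
  have h2 : ∑ j ∈ range (n + 1), (-1 : ℝ) ^ j * n.choose j * f j
      = ∑ j ∈ range n, (-1 : ℝ) ^ (j+1) * n.choose (j+1) * f (j+1) + f 0 := by
    rw [Finset.sum_range_succ' (fun j => (-1 : ℝ) ^ j * n.choose j * f j) n]
    simp
  have h3 : ∑ j ∈ range (n + 1), (-1 : ℝ) ^ (j+1) * n.choose (j+1) * f (j+1)
      = ∑ j ∈ range n, (-1 : ℝ) ^ (j+1) * n.choose (j+1) * f (j+1) := by
    rw [Finset.sum_range_succ]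
    simp [Nat.choose_succ_self]
  rw [show (∑ j ∈ range (n+1), (-1:ℝ)^j * n.choose j * (f j - f (j+1)))
      = (∑ j ∈ range (n+1), (-1:ℝ)^j * n.choose j * f j)
        - ∑ j ∈ range (n+1), (-1:ℝ)^j * n.choose j * f (j+1) from by
    rw [← Finset.sum_sub_distrib]; exact Finset.sum_congr rfl fun j _ => by ring]
  rw [h2, ← h3]
  have h5 : ∑ k ∈ range (n+1), (-1:ℝ)^(k+1) * (n+1).choose (k+1) * f (k+1)
      = (∑ j ∈ range (n+1), (-1:ℝ)^(j+1) * n.choose (j+1) * f (j+1))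
        - ∑ j ∈ range (n+1), (-1:ℝ)^j * n.choose j * f (j+1) := by
    rw [← Finset.sum_sub_distrib]
    refine Finset.sum_congr rfl fun j _ => ?_
    rw [h1 j]; ring
  simp only [pow_zero, Nat.choose_zero_right, Nat.cast_one, one_mul]
  linarith [h5]

lemma F_eq (n : ℕ) : ∀ (k : ℕ) (c : ℝ), k ≤ n →
    ∑ j ∈ range (n + 1), (-1 : ℝ) ^ j * n.choose j * ∏ i ∈ range k, ((j : ℝ) + c + i)
      = if k = n then (-1 : ℝ) ^ n * n.factorial else 0 := by
  induction n with
  | zero =>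
    intro k c hk
    interval_cases k
    simp
  | succ n ih =>
    intro k c hk
    match k with
    | 0 =>
      have := sum_shift n (fun _ => (1 : ℝ))
      simp only [prod_range_zero, mul_one, sub_self, mul_zero, Finset.sum_const_zero] at this ⊢
      rw [show n + 1 + 1 = n + 2 from rfl] at this
      rw [this]
      simp [Nat.succ_ne_zero, (Nat.succ_ne_zero n).symm]
    | (k' + 1) =>
      rw [show n + 1 + 1 = n + 2 from rfl, sum_shift n (fun j => ∏ i ∈ range (k' + 1), ((j : ℝ) + c + i))]
      have hdiff : ∀ j : ℕ,
          ((∏ i ∈ range (k' + 1), ((j : ℝ) + c + i))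
            - ∏ i ∈ range (k' + 1), (((j + 1 : ℕ) : ℝ) + c + i))
          = -(k' + 1 : ℝ) * ∏ i ∈ range k', ((j : ℝ) + (c + 1) + i) := by
        intro j
        have e1 : (∏ i ∈ range (k' + 1), ((j : ℝ) + c + i))
            = ((j : ℝ) + c) * ∏ i ∈ range k', ((j : ℝ) + (c + 1) + i) := by
          rw [Finset.prod_range_succ' (fun i => ((j : ℝ) + c + i)) k']
          simp only [Nat.cast_zero, add_zero, Nat.cast_add, Nat.cast_one]
          rw [mul_comm]
          congr 1
          exact Finset.prod_congr rfl fun i _ => by push_cast; ring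
        have e2 : (∏ i ∈ range (k' + 1), (((j + 1 : ℕ) : ℝ) + c + i))
            = (∏ i ∈ range k', ((j : ℝ) + (c + 1) + i)) * ((j : ℝ) + c + 1 + k') := by
          rw [Finset.prod_range_succ]
          push_cast
          congr 1
          · exact Finset.prod_congr rfl fun i _ => by ring
          · ring
        rw [e1, e2]; ring
      have hsum : ∑ j ∈ range (n + 1), (-1 : ℝ) ^ j * n.choose j
            * ((∏ i ∈ range (k' + 1), ((j : ℝ) + c + i))
              - ∏ i ∈ range (k' + 1), (((j + 1 : ℕ) : ℝ) + c + i))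
          = -(k' + 1 : ℝ) * ∑ j ∈ range (n + 1), (-1 : ℝ) ^ j * n.choose j
              * ∏ i ∈ range k', ((j : ℝ) + (c + 1) + i) := by
        rw [Finset.mul_sum]
        refine Finset.sum_congr rfl fun j _ => ?_
        rw [hdiff j]; ring
      push_cast at hsum ⊢
      rw [hsum, ih k' (c + 1) (Nat.lt_succ_iff.mp hk)]
      rcases eq_or_ne k' n with h | h
      · subst h
        simp only [if_pos rfl, if_pos (rfl : k' + 1 = k' + 1)]
        rw [Nat.factorial_succ]
        push_cast; ring
      · simp [h, fun hc : k' + 1 = n + 1 => h (Nat.succ_injective hc)]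


lemma Gamma_mul_ascProd (d : ℕ) (t : ℝ) (ht : 0 < t) :
    Real.Gamma t * ∏ i ∈ range d, (t + i) = Real.Gamma (t + d) := by
  induction d with
  | zero => simp
  | succ d ih =>
    rw [Finset.prod_range_succ, ← mul_assoc, ih]
    have hne : t + d ≠ 0 := by positivity
    rw [show t + ((d : ℕ) + 1 : ℕ) = (t + d) + 1 by push_cast; ring,
      Real.Gamma_add_one hne]
    ring

lemma genBinom_mul_Gamma (α : ℝ) (hα : -1 < α) (n j : ℕ) (hj : j ≤ n) :
    genBinom ((n : ℝ) + α) (n - j) * Real.Gamma ((j : ℝ) + α + 1)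
      = Real.Gamma ((n : ℝ) + α + 1) / (n - j).factorial := by
  set d := n - j with hd
  have hnd : (n : ℝ) = (j : ℝ) + d := by
    rw [hd, Nat.cast_sub hj]; ring
  have hreflect : ∏ i ∈ range d, ((n : ℝ) + α - i)
      = ∏ i ∈ range d, ((j : ℝ) + α + 1 + i) := by
    rw [← Finset.prod_range_reflect (fun i => ((j : ℝ) + α + 1 + i)) d]
    refine Finset.prod_congr rfl fun i hi => ?_
    rw [Finset.mem_range] at hi
    have h1 : ((d - 1 - i : ℕ) : ℝ) = (d : ℝ) - 1 - i := by
      rw [Nat.cast_sub (by omega), Nat.cast_sub (by omega)]; push_cast; ring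
    simp only [h1, hnd]; ring
  have ht : (0 : ℝ) < (j : ℝ) + α + 1 := by
    have : (0:ℝ) ≤ (j:ℝ) := Nat.cast_nonneg j
    linarith
  have hasc := Gamma_mul_ascProd d ((j : ℝ) + α + 1) ht
  rw [genBinom, hreflect, div_mul_eq_mul_div, mul_comm, hasc]
  congr 2
  rw [hnd]; ring

lemma integrableOn_pow_rpow_exp (α : ℝ) (hα : -1 < α) (k : ℕ) :
    IntegrableOn (fun x : ℝ => x ^ k * x ^ α * Real.exp (-x)) (Set.Ioi 0) := by
  have hpos : (0 : ℝ) < (k : ℝ) + α + 1 := by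
    have : (0:ℝ) ≤ (k:ℝ) := Nat.cast_nonneg k
    linarith
  refine (Real.GammaIntegral_convergent hpos).congr_fun ?_ measurableSet_Ioi
  intro x hx
  rw [Set.mem_Ioi] at hx
  show Real.exp (-x) * x ^ ((k:ℝ) + α + 1 - 1) = x ^ k * x ^ α * Real.exp (-x)
  rw [add_sub_cancel_right, Real.rpow_add hx, Real.rpow_natCast]
  ring

lemma integral_pow_rpow_exp (α : ℝ) (hα : -1 < α) (k : ℕ) :
    ∫ x in Set.Ioi (0:ℝ), x ^ k * x ^ α * Real.exp (-x)
      = Real.Gamma ((k : ℝ) + α + 1) := by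
  have hpos : (0 : ℝ) < (k : ℝ) + α + 1 := by
    have : (0:ℝ) ≤ (k:ℝ) := Nat.cast_nonneg k
    linarith
  rw [Real.Gamma_eq_integral hpos]
  refine setIntegral_congr_fun measurableSet_Ioi fun x hx => ?_
  rw [Set.mem_Ioi] at hx
  show x ^ k * x ^ α * Real.exp (-x) = Real.exp (-x) * x ^ ((k:ℝ) + α + 1 - 1)
  rw [add_sub_cancel_right, Real.rpow_add hx, Real.rpow_natCast]
  ring

noncomputable def lagC (α : ℝ) (n k : ℕ) : ℝ :=
  (-1 : ℝ) ^ k * genBinom ((n : ℝ) + α) (n - k) / k.factorial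

lemma laguerre_eq (α : ℝ) (n : ℕ) (x : ℝ) :
    laguerre α n x = ∑ k ∈ range (n + 1), lagC α n k * x ^ k := by
  unfold laguerre lagC
  exact Finset.sum_congr rfl fun k _ => by ring

lemma lagSum (α : ℝ) (hα : -1 < α) (n k : ℕ) (hk : k ≤ n) :
    ∑ j ∈ range (n + 1), lagC α n j * Real.Gamma ((j : ℝ) + (k : ℝ) + α + 1)
      = if k = n then (-1 : ℝ) ^ n * Real.Gamma ((n : ℝ) + α + 1) else 0 := by
  have hterm : ∀ j ∈ range (n + 1),
      lagC α n j * Real.Gamma ((j : ℝ) + (k : ℝ) + α + 1)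
        = Real.Gamma ((n : ℝ) + α + 1) / n.factorial
          * ((-1 : ℝ) ^ j * n.choose j * ∏ i ∈ range k, ((j : ℝ) + (α + 1) + i)) := by
    intro j hj
    rw [Finset.mem_range, Nat.lt_succ_iff] at hj
    have ht : (0 : ℝ) < (j : ℝ) + α + 1 := by
      have : (0:ℝ) ≤ (j:ℝ) := Nat.cast_nonneg j
      linarith
    have hG : Real.Gamma ((j : ℝ) + (k : ℝ) + α + 1)
        = Real.Gamma ((j : ℝ) + α + 1) * ∏ i ∈ range k, ((j : ℝ) + (α + 1) + i) := by
      have := Gamma_mul_ascProd k ((j : ℝ) + α + 1) ht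
      rw [show (j : ℝ) + α + 1 + (k : ℕ) = (j : ℝ) + (k : ℝ) + α + 1 by push_cast; ring] at this
      rw [← this]
      congr 1
      exact Finset.prod_congr rfl fun i _ => by ring
    have hfac : (n.factorial : ℝ) = n.choose j * j.factorial * (n - j).factorial := by
      rw [← Nat.choose_mul_factorial_mul_factorial hj]; push_cast; ring
    have hbg := genBinom_mul_Gamma α hα n j hj
    have h1 : ((n - j).factorial : ℝ) ≠ 0 := Nat.cast_ne_zero.mpr (Nat.factorial_ne_zero _)
    have h2 : (j.factorial : ℝ) ≠ 0 := Nat.cast_ne_zero.mpr (Nat.factorial_ne_zero _)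
    have h3 : (n.factorial : ℝ) ≠ 0 := Nat.cast_ne_zero.mpr (Nat.factorial_ne_zero _)
    have hbg' : genBinom ((n:ℝ)+α) (n-j) * Real.Gamma ((j:ℝ)+α+1) * (n-j).factorial
        = Real.Gamma ((n:ℝ)+α+1) := by
      rw [hbg]; field_simp
    have h4 : ((n.choose j : ℕ) : ℝ) ≠ 0 := Nat.cast_ne_zero.mpr (Nat.choose_pos hj).ne'
    rw [hG, lagC, ← hbg', hfac]
    field_simp
  rw [Finset.sum_congr rfl hterm, ← Finset.mul_sum, F_eq n k (α + 1) hk]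
  have h3 : (n.factorial : ℝ) ≠ 0 := Nat.cast_ne_zero.mpr (Nat.factorial_ne_zero _)
  split
  · field_simp
  · simp

lemma key_integral (α : ℝ) (hα : -1 < α) (n m : ℕ) :
    (∫ x in Set.Ioi (0:ℝ), laguerre α n x * laguerre α m x * x ^ α * Real.exp (-x))
      = ∑ k ∈ range (n + 1), ∑ j ∈ range (m + 1),
          lagC α n k * lagC α m j * Real.Gamma ((k : ℝ) + (j : ℝ) + α + 1) := by
  have hfun : Set.EqOn
      (fun x : ℝ => laguerre α n x * laguerre α m x * x ^ α * Real.exp (-x))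
      (fun x : ℝ => ∑ k ∈ range (n + 1), ∑ j ∈ range (m + 1),
        lagC α n k * lagC α m j * (x ^ (k + j) * x ^ α * Real.exp (-x))) (Set.Ioi 0) := by
    intro x hx
    simp only
    rw [laguerre_eq, laguerre_eq, Finset.sum_mul_sum, Finset.sum_mul, Finset.sum_mul]
    refine Finset.sum_congr rfl fun k _ => ?_
    rw [Finset.sum_mul, Finset.sum_mul]
    refine Finset.sum_congr rfl fun j _ => ?_
    rw [pow_add]; ring
  rw [setIntegral_congr_fun measurableSet_Ioi hfun]
  rw [integral_finset_sum _ (fun k _ => integrable_finset_sum _ (fun j _ =>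
    ((integrableOn_pow_rpow_exp α hα (k + j)).const_mul _)))]
  refine Finset.sum_congr rfl fun k _ => ?_
  rw [integral_finset_sum _ (fun j _ => ((integrableOn_pow_rpow_exp α hα (k + j)).const_mul _))]
  refine Finset.sum_congr rfl fun j _ => ?_
  rw [integral_const_mul, integral_pow_rpow_exp α hα (k + j)]
  push_cast
  ring_nf

/-- Orthogonality of generalized Laguerre polynomials with weight x^α e^{-x} on (0,∞). -/
theorem laguerre_orthogonality (α : ℝ) (hα : -1 < α) (n m : ℕ) :
    (n ≠ m → ∫ x in Set.Ioi (0 : ℝ),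
        laguerre α n x * laguerre α m x * x ^ α * Real.exp (-x) = 0) ∧
    (∫ x in Set.Ioi (0 : ℝ),
        laguerre α n x * laguerre α n x * x ^ α * Real.exp (-x))
      = Real.Gamma (n + α + 1) / n.factorial := by
  have diag : ∀ N : ℕ,
      (∫ x in Set.Ioi (0 : ℝ),
        laguerre α N x * laguerre α N x * x ^ α * Real.exp (-x))
      = Real.Gamma (N + α + 1) / N.factorial := by
    intro N
    rw [key_integral α hα N N]
    have hstep : ∀ k ∈ range (N + 1),
        (∑ j ∈ range (N + 1), lagC α N k * lagC α N j * Real.Gamma ((k:ℝ) + (j:ℝ) + α + 1))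
          = lagC α N k * (if k = N then (-1 : ℝ) ^ N * Real.Gamma ((N : ℝ) + α + 1) else 0) := by
      intro k hk
      rw [Finset.mem_range, Nat.lt_succ_iff] at hk
      rw [← lagSum α hα N k hk, Finset.mul_sum]
      refine Finset.sum_congr rfl fun j _ => ?_
      rw [show (j:ℝ) + (k:ℝ) + α + 1 = (k:ℝ) + (j:ℝ) + α + 1 by ring]
      ring
    rw [Finset.sum_congr rfl hstep, Finset.sum_range_succ, if_pos rfl,
      Finset.sum_eq_zero (fun k hk => by
        rw [Finset.mem_range] at hk
        rw [if_neg (Nat.ne_of_lt hk), mul_zero]), zero_add]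
    have hC : lagC α N N = (-1 : ℝ) ^ N / N.factorial := by
      rw [lagC, Nat.sub_self, genBinom]
      simp
    rw [hC]
    have h3 : (N.factorial : ℝ) ≠ 0 := Nat.cast_ne_zero.mpr (Nat.factorial_ne_zero _)
    field_simp
    rw [show ((-1:ℝ)^N)^2 = 1 by rw [← pow_mul]; exact (even_two.mul_left N).neg_one_pow]
    simp
  refine ⟨fun hnm => ?_, diag n⟩
  rw [key_integral α hα n m]
  rcases Nat.lt_or_ge n m with h | h
  · -- n < m : inner sum over j vanishes
    refine Finset.sum_eq_zero fun k hk => ?_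
    rw [Finset.mem_range, Nat.lt_succ_iff] at hk
    have hk' : k ≤ m := hk.trans h.le
    have hkm : k ≠ m := fun he => absurd (he ▸ hk) (by omega)
    have := lagSum α hα m k hk'
    rw [if_neg hkm] at this
    calc ∑ j ∈ range (m + 1), lagC α n k * lagC α m j * Real.Gamma ((k:ℝ) + (j:ℝ) + α + 1)
        = lagC α n k * ∑ j ∈ range (m + 1), lagC α m j * Real.Gamma ((j:ℝ) + (k:ℝ) + α + 1) := by
          rw [Finset.mul_sum]
          refine Finset.sum_congr rfl fun j _ => ?_
          rw [show (j:ℝ) + (k:ℝ) + α + 1 = (k:ℝ) + (j:ℝ) + α + 1 by ring]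
          ring
      _ = 0 := by rw [this, mul_zero]
  · have h' : m < n := lt_of_le_of_ne h (fun he => hnm he.symm)
    rw [Finset.sum_comm]
    refine Finset.sum_eq_zero fun j hj => ?_
    rw [Finset.mem_range, Nat.lt_succ_iff] at hj
    have hj' : j ≤ n := hj.trans h'.le
    have hjn : j ≠ n := by omega
    have := lagSum α hα n j hj'
    rw [if_neg hjn] at this
    calc ∑ k ∈ range (n + 1), lagC α n k * lagC α m j * Real.Gamma ((k:ℝ) + (j:ℝ) + α + 1)
        = lagC α m j * ∑ k ∈ range (n + 1), lagC α n k * Real.Gamma ((k:ℝ) + (j:ℝ) + α + 1) := by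
          rw [Finset.mul_sum]
          exact Finset.sum_congr rfl fun k _ => by ring
      _ = 0 := by rw [this, mul_zero]
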